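/- The family of sets D_{hk,φ}, indexed by k ∈ ℤⁿ and permutations φ of {1,…,n}, covers ℝⁿ: every x ∈ ℝⁿ belongs to some D_{hk,φ}. Moreover any two distinct members of this family have disjoint topological interiors. -/

import Mathlib

/-- The Freudenthal cell `D_{b,φ} = {x : 0 ≤ x_{φ(1)} - b_{φ(1)} ≤ ⋯ ≤ x_{φ(n)} - b_{φ(n)} ≤ h}`
of the cube with corner `b` and edge length `h`, associated to the permutation `φ`. -/
def freudenthalCell {n : ℕ} (h : ℝ) (b : EuclideanSpace ℝ (Fin n)) (φ : Equiv.Perm (Fin n)) :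
    Set (EuclideanSpace ℝ (Fin n)) :=
  {x | (∀ i : Fin n, 0 ≤ x (φ i) - b (φ i) ∧ x (φ i) - b (φ i) ≤ h) ∧
    ∀ i j : Fin n, i ≤ j → x (φ i) - b (φ i) ≤ x (φ j) - b (φ j)}

lemma freudenthal_strict {n : ℕ} {h : ℝ} {b x : EuclideanSpace ℝ (Fin n)}
    {φ : Equiv.Perm (Fin n)} (hx : x ∈ interior (freudenthalCell h b φ)) :
    (∀ i, 0 < x (φ i) - b (φ i) ∧ x (φ i) - b (φ i) < h) ∧
    ∀ i j : Fin n, i < j → x (φ i) - b (φ i) < x (φ j) - b (φ j) := by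
  rw [mem_interior_iff_mem_nhds, Metric.mem_nhds_iff] at hx
  obtain ⟨ε, hε, hball⟩ := hx
  have key : ∀ (m : Fin n) (δ : ℝ), |δ| < ε →
      x + EuclideanSpace.single m δ ∈ freudenthalCell h b φ := by
    intro m δ hδ
    apply hball
    simp only [Metric.mem_ball, dist_eq_norm, add_sub_cancel_left,
      EuclideanSpace.norm_single]
    simpa using hδ
  have habs : |(-(ε/2) : ℝ)| < ε := by rw [abs_neg, abs_of_pos (by linarith)]; linarith
  have habs' : |((ε/2) : ℝ)| < ε := by rw [abs_of_pos (by linarith)]; linarith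
  have hadd : ∀ (v : EuclideanSpace ℝ (Fin n)) (l : Fin n), (x + v) l = x l + v l :=
    fun v l => rfl
  refine ⟨fun i => ?_, fun i j hij => ?_⟩
  · constructor
    · have := ((key (φ i) (-(ε/2)) habs).1 i).1
      rw [hadd, EuclideanSpace.single_apply, if_pos rfl] at this
      linarith
    · have := ((key (φ i) (ε/2) habs').1 i).2
      rw [hadd, EuclideanSpace.single_apply, if_pos rfl] at this
      linarith
  · have := (key (φ j) (-(ε/2)) habs).2 i j hij.le
    rw [hadd, hadd, EuclideanSpace.single_apply, EuclideanSpace.single_apply,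
      if_pos rfl, if_neg (fun hc => hij.ne (φ.injective hc))] at this
    linarith

/-- The family `(D_{hk,φ})_{k ∈ ℤⁿ, φ ∈ Sₙ}` is a simplicial mesh of `ℝⁿ`: it covers the
whole space and any two distinct members have disjoint topological interiors. -/
theorem freudenthal_mesh_of_space {n : ℕ} (hn : 1 ≤ n) (h : ℝ) (hh : 0 < h) :
    (∀ x : EuclideanSpace ℝ (Fin n), ∃ (k : Fin n → ℤ) (φ : Equiv.Perm (Fin n)),
      x ∈ freudenthalCell h (WithLp.toLp 2 (fun i => h * (k i : ℝ)) : EuclideanSpace ℝ (Fin n)) φ) ∧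
    (∀ (k k' : Fin n → ℤ) (φ φ' : Equiv.Perm (Fin n)), (k, φ) ≠ (k', φ') →
      interior (freudenthalCell h (WithLp.toLp 2 (fun i => h * (k i : ℝ)) : EuclideanSpace ℝ (Fin n)) φ) ∩
        interior (freudenthalCell h (WithLp.toLp 2 (fun i => h * (k' i : ℝ)) : EuclideanSpace ℝ (Fin n)) φ')
        = ∅) := by
  constructor
  · intro x
    set k : Fin n → ℤ := fun i => ⌊x i / h⌋ with hk
    set y : Fin n → ℝ := fun i => x i - h * k i with hy
    have hy0 : ∀ i, 0 ≤ y i ∧ y i < h := by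
      intro i
      have h1 : (k i : ℝ) ≤ x i / h := Int.floor_le _
      have h2 : x i / h < k i + 1 := Int.lt_floor_add_one _
      constructor
      · have := mul_le_mul_of_nonneg_left h1 hh.le
        rw [mul_div_cancel₀ _ hh.ne'] at this
        simpa [hy] using this
      · have := mul_lt_mul_of_pos_left h2 hh
        rw [mul_div_cancel₀ _ hh.ne'] at this
        simp only [hy]
        nlinarith
    refine ⟨k, Tuple.sort y, fun i => ⟨(hy0 _).1, (hy0 _).2.le⟩, fun i j hij => ?_⟩
    exact Tuple.monotone_sort y hij
  · intro k k' φ φ' hne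
    by_contra hcon
    obtain ⟨x, hx1, hx2⟩ := Set.nonempty_iff_ne_empty.mpr hcon
    obtain ⟨hs1, hc1⟩ := freudenthal_strict hx1
    obtain ⟨hs2, hc2⟩ := freudenthal_strict hx2
    -- every coordinate, via surjectivity of φ
    have hall : ∀ (κ : Fin n → ℤ) (ψ : Equiv.Perm (Fin n)),
        (∀ i, 0 < x (ψ i) - h * κ (ψ i) ∧ x (ψ i) - h * κ (ψ i) < h) →
        ∀ m, 0 < x m - h * κ m ∧ x m - h * κ m < h := by
      intro κ ψ hs m
      have := hs (ψ.symm m)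
      rwa [Equiv.apply_symm_apply] at this
    have h1 := hall k φ hs1
    have h2 := hall k' φ' hs2
    have hkk : k = k' := by
      funext m
      have e1 : ⌊x m / h⌋ = k m := by
        rw [Int.floor_eq_iff]
        constructor
        · rw [le_div_iff₀ hh]; nlinarith [(h1 m).1]
        · rw [div_lt_iff₀ hh]; nlinarith [(h1 m).2]
      have e2 : ⌊x m / h⌋ = k' m := by
        rw [Int.floor_eq_iff]
        constructor
        · rw [le_div_iff₀ hh]; nlinarith [(h2 m).1]
        · rw [div_lt_iff₀ hh]; nlinarith [(h2 m).2]
      rw [← e1, e2]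
    subst hkk
    set y : Fin n → ℝ := fun m => x m - h * k m with hy
    have hm1 : StrictMono (y ∘ φ) := fun i j hij => hc1 i j hij
    have hm2 : StrictMono (y ∘ φ') := fun i j hij => hc2 i j hij
    have hrange : Set.range (y ∘ φ) = Set.range (y ∘ φ') := by
      rw [Set.range_comp, Set.range_comp, Equiv.range_eq_univ, Equiv.range_eq_univ]
    have heq : y ∘ φ = y ∘ φ' := (StrictMono.range_inj hm1 hm2).mp hrange
    have hyinj : Function.Injective y := by
      have : Function.Injective (y ∘ φ) := hm1.injective
      intro a b hab
      have := this.eq_iff.mp (show (y ∘ φ) (φ.symm a) = (y ∘ φ) (φ.symm b) by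
        simp [Function.comp, hab])
      simpa using congrArg φ this
    have hφ : φ = φ' := by
      apply Equiv.ext
      intro i
      exact hyinj (congrFun heq i)
    exact hne (by rw [hφ])
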